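/- Let n ≥ 2. Model the number of colours C_n used by the buffered online colouring algorithm with buffer size 2 on the crown graph in alternate order as follows: let Ω = (Fin (n-2) → Bool) carry the uniform probability measure (i.i.d. fair coin flips), and define C(ω) = 2 + (the number of initial coordinates of ω equal to true before the first false; this count is n-2, giving C = n, when all flips are true). Then the expected value of C equals 3 − 1/2^(n−2). -/

import Mathlib

/-- The number of initial coordinates of `ω` equal to `true` before the first `false`
(equal to `m` when all coordinates are `true`). -/
def initTrues {m : ℕ} (ω : Fin m → Bool) : ℕ :=
  (Finset.univ.filter (fun i : Fin m => ∀ j ≤ i, ω j = true)).card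

lemma initTrues_cond_zero {m : ℕ} (b : Bool) (ω : Fin m → Bool) :
    (∀ j ≤ (0 : Fin (m + 1)), (Fin.cons b ω : Fin (m + 1) → Bool) j = true) ↔ b = true := by
  constructor
  · intro h; simpa using h 0 le_rfl
  · intro hb j hj
    rw [Fin.le_zero_iff] at hj
    subst hj; simpa using hb

lemma initTrues_cond_succ {m : ℕ} (b : Bool) (ω : Fin m → Bool) (i : Fin m) :
    (∀ j ≤ Fin.succ i, (Fin.cons b ω : Fin (m + 1) → Bool) j = true) ↔ (b = true ∧ ∀ j ≤ i, ω j = true) := by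
  constructor
  · intro h
    refine ⟨by simpa using h 0 (Fin.zero_le _), fun j hj => ?_⟩
    have := h j.succ (by rwa [Fin.succ_le_succ_iff])
    simpa using this
  · rintro ⟨hb, h⟩ j hj
    induction j using Fin.cases with
    | zero => simpa using hb
    | succ j' =>
      have := h j' (by rwa [Fin.succ_le_succ_iff] at hj)
      simpa using this

lemma initTrues_cons {m : ℕ} (b : Bool) (ω : Fin m → Bool) :
    initTrues (Fin.cons b ω : Fin (m + 1) → Bool) = if b then initTrues ω + 1 else 0 := by
  unfold initTrues
  rw [Finset.card_filter, Finset.card_filter, Fin.sum_univ_succ]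
  have h0 : (if (∀ j ≤ (0 : Fin (m + 1)), (Fin.cons b ω : Fin (m + 1) → Bool) j = true) then 1 else 0)
      = (if b = true then 1 else 0) := by
    exact if_congr (initTrues_cond_zero b ω) rfl rfl
  have hs : ∀ i : Fin m, (if (∀ j ≤ Fin.succ i, (Fin.cons b ω : Fin (m + 1) → Bool) j = true) then 1 else 0)
      = (if (b = true ∧ ∀ j ≤ i, ω j = true) then 1 else 0) := fun i =>
    if_congr (initTrues_cond_succ b ω i) rfl rfl
  rw [h0, Finset.sum_congr rfl fun i _ => hs i]
  cases b with
  | false => simp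
  | true => simp [add_comm]

lemma sum_initTrues (m : ℕ) : ∑ ω : Fin m → Bool, initTrues ω = 2 ^ m - 1 := by
  induction m with
  | zero => decide
  | succ m ih =>
    rw [← (Fin.consEquiv fun _ => Bool).sum_comp]
    rw [Fintype.sum_prod_type]
    have h1 : 1 ≤ 2 ^ m := Nat.one_le_two_pow
    have hc : Fintype.card (Fin m → Bool) = 2 ^ m := by
      simp [Fintype.card_fun]
    simp [Fin.consEquiv, initTrues_cons, Finset.sum_add_distrib, ih, hc]
    ring_nf
    omega

/-- Theorem 4 (corrected): the expected number of colours used by the buffered online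
colouring algorithm with buffer size 2 on the crown graph `C_n` in alternate order,
modelled by `C ω = 2 + initTrues ω` on the uniform space `Fin (n-2) → Bool`,
is `3 - 1/2^(n-2)`. -/
theorem crown_buffer2_expected_colours (n : ℕ) (hn : 2 ≤ n) :
    ∫ ω, ((2 + initTrues ω : ℕ) : ℝ)
        ∂((PMF.uniformOfFintype (Fin (n - 2) → Bool)).toMeasure)
      = 3 - 1 / 2 ^ (n - 2) := by
  set m := n - 2 with hm
  rw [MeasureTheory.integral_fintype MeasureTheory.Integrable.of_finite]
  have hc : Fintype.card (Fin m → Bool) = 2 ^ m := by simp [Fintype.card_fun]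
  have hsingle : ∀ ω : Fin m → Bool,
      ((PMF.uniformOfFintype (Fin m → Bool)).toMeasure {ω}).toReal = (2 ^ m : ℝ)⁻¹ := by
    intro ω
    rw [PMF.toMeasure_apply_singleton _ _ (measurableSet_singleton _),
      PMF.uniformOfFintype_apply, hc]
    simp [ENNReal.toReal_inv]
  simp only [MeasureTheory.Measure.real, hsingle, smul_eq_mul, Nat.cast_add, Nat.cast_ofNat]
  rw [← Finset.mul_sum, Finset.sum_add_distrib, Finset.sum_const, Finset.card_univ, hc,
    ← Nat.cast_sum, sum_initTrues]
  have h1 : 1 ≤ 2 ^ m := Nat.one_le_two_pow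
  have h2 : ((2 ^ m - 1 : ℕ) : ℝ) = 2 ^ m - 1 := by
    push_cast [h1]; ring
  rw [h2]
  have hpos : (2 : ℝ) ^ m ≠ 0 := by positivity
  field_simp
  ring
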